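/- Let X be a linearly ordered set and let u = (a₁,...,aₙ) and v = (b₁,...,bₙ) be two nondecreasing (sorted) lists over X of the same length n with u strictly greater than v in the lexicographic order. Then for every c ∈ X, the sorted list obtained by inserting c into u in order is strictly greater in the lexicographic order than the sorted list obtained by inserting c into v in order. (In other words, the degree-lexicographic ordering on the free commutative monoid on X is a monomial ordering.) -/

import Mathlib

/-- The degree-lexicographic ordering on the free commutative monoid on a linearly ordered
set `X` is monomial: if `u` and `v` are sorted lists of the same length with `v < u`
lexicographically, then for any `c`, inserting `c` in order into `v` yields a list that is
lexicographically smaller than the one obtained by inserting `c` in order into `u`. -/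
theorem orderedInsert_lex_mono (X : Type*) [LinearOrder X] (u v : List X) (c : X)
    (hu : u.Pairwise (· ≤ ·)) (hv : v.Pairwise (· ≤ ·)) (hlen : u.length = v.length)
    (h : List.Lex (· < ·) v u) :
    List.Lex (· < ·) (v.orderedInsert (· ≤ ·) c) (u.orderedInsert (· ≤ ·) c) := by
  induction h with
  | nil => simp at hlen
  | @cons a l₁ l₂ h ih =>
    simp only [List.orderedInsert]
    by_cases hc : c ≤ a
    · simp only [hc, if_true]
      exact List.Lex.cons (List.Lex.cons h)
    · simp only [hc, if_false]
      exact List.Lex.cons (ih (List.Pairwise.of_cons hu) (List.Pairwise.of_cons hv)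
        (by simpa using hlen))
  | @rel a l₁ b l₂ hab =>
    simp only [List.orderedInsert]
    by_cases hca : c ≤ a
    · have hcb : c ≤ b := hca.trans hab.le
      simp only [hcb, hca, if_true]
      exact List.Lex.cons (List.Lex.rel hab)
    · by_cases hcb : c ≤ b
      · simp only [hcb, hca, if_true, if_false]
        exact List.Lex.rel (lt_of_not_ge hca)
      · simp only [hcb, hca, if_false]
        exact List.Lex.rel hab
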